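/- In the free-fermion case η = π/4 (so α = 2), μ = 0, the NE arctic-curve parametrization degenerates to a straight segment as λ → −π/4 from above, under a square-root rescaling of the parameter: for every ξ > 0, lim_{ε→0⁺} X_NE(ξ·√ε)|_{λ=−π/4+ε} = −4ξ²/(1+4ξ²) and lim_{ε→0⁺} Y_NE(ξ·√ε)|_{λ=−π/4+ε} = 2 − 4ξ²/(1+4ξ²). -/

import Mathlib

open Real Filter Topology

/-- The inverse slope `A(ξ) = s(ξ)⁻¹` of the family of tangent lines in the Tangent
Method for the 20V model with DWBC3. -/
noncomputable def A20V (η lam mu ξ : ℝ) : ℝ :=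
  (sin (ξ + lam + η) * sin (ξ + lam - η) / (sin ξ * sin (ξ + 2 * η))) *
    ((sin ξ * sin (ξ + 2 * η) +
        sin (ξ + (lam - η + mu) / 2) * sin (ξ + (lam + 3 * η + mu) / 2)) /
      (sin (ξ + lam + η) * sin (ξ + lam - η) +
        sin (ξ + (lam - η + mu) / 2) * sin (ξ + (lam + 3 * η + mu) / 2)))

/-- The saddle-point exit position `κ(ξ)` of the Tangent Method for the 20V model
with DWBC3, with `α = π/(π - 2η)`. -/
noncomputable def kappa20V (η lam mu ξ : ℝ) : ℝ :=
  (2 * cot (ξ + lam - η) - cot ξ - cot (ξ + lam + η) +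
      (π / (π - 2 * η)) * cot ((π / (π - 2 * η)) * ξ) -
      (π / (π - 2 * η)) * cot ((π / (π - 2 * η)) * (ξ + lam - η))) *
    (sin (ξ + lam + η) * sin (ξ + lam - η) * sin (ξ + (lam - η + mu) / 2) *
      sin (ξ + (lam + 3 * η + mu) / 2)) /
    (sin (2 * η) *
      (sin (ξ + lam + η) * sin (ξ + lam - η) +
        sin (ξ + (lam - η + mu) / 2) * sin (ξ + (lam + 3 * η + mu) / 2)))

/-- The `x`-coordinate of the NE branch of the arctic curve (envelope of the family
of tangent lines): `X_NE(ξ) = κ'(ξ)/A'(ξ)`. -/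
noncomputable def Xne (η lam mu ξ : ℝ) : ℝ :=
  deriv (kappa20V η lam mu) ξ / deriv (A20V η lam mu) ξ

/-- The `y`-coordinate of the NE branch of the arctic curve:
`Y_NE(ξ) = κ(ξ) - A(ξ)·κ'(ξ)/A'(ξ)`. -/
noncomputable def Yne (η lam mu ξ : ℝ) : ℝ :=
  kappa20V η lam mu ξ - A20V η lam mu ξ * Xne η lam mu ξ

lemma sin_mul_sin (a b : ℝ) : sin a * sin b = (cos (a - b) - cos (a + b)) / 2 := by
  rw [Real.cos_sub, Real.cos_add]; ring
lemma sin_mul_cos (a b : ℝ) : sin a * cos b = (sin (a + b) + sin (a - b)) / 2 := by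
  rw [Real.sin_add, Real.sin_sub]; ring
lemma idP (θ : ℝ) : sin θ * sin (θ - π/2) = -(sin (2*θ))/2 := by
  rw [Real.sin_sub_pi_div_two, Real.sin_two_mul]; ring
lemma idQ (y : ℝ) : sin y * sin (y + π/2) = sin (2*y)/2 := by
  rw [Real.sin_add_pi_div_two, Real.sin_two_mul]; ring
lemma idR (a : ℝ) : sin (a - π/4) * sin (a + π/4) = -(cos (2*a))/2 := by
  rw [sin_mul_sin, show a - π/4 - (a + π/4) = -(π/2) by ring,
    show a - π/4 + (a + π/4) = 2*a by ring, Real.cos_neg, Real.cos_pi_div_two]; ring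
lemma idQR (ε y : ℝ) :
    sin (2*y)/2 + -(cos (2*y + ε))/2 = sin (π/4 + ε/2) * sin (2*y + ε/2 - π/4) := by
  rw [sin_mul_sin, show π/4 + ε/2 - (2*y + ε/2 - π/4) = π/2 - 2*y by ring,
    show π/4 + ε/2 + (2*y + ε/2 - π/4) = 2*y + ε by ring, Real.cos_pi_div_two_sub]; ring
lemma idPR (ε y : ℝ) :
    -(sin (2*y + 2*ε))/2 + -(cos (2*y + ε))/2
      = -(sin (π/4 + ε/2) * cos (2*y + 3*ε/2 - π/4)) := by
  rw [sin_mul_cos, show π/4 + ε/2 + (2*y + 3*ε/2 - π/4) = 2*y + 2*ε by ring,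
    show π/4 + ε/2 - (2*y + 3*ε/2 - π/4) = π/2 - (2*y + ε) by ring, Real.sin_pi_div_two_sub]; ring

/-- closed form of A20V in the free-fermion specialization -/
noncomputable def As (ε y : ℝ) : ℝ :=
  sin (2*y + 2*ε) * sin (2*y + ε/2 - π/4) / (sin (2*y) * cos (2*y + 3*ε/2 - π/4))

lemma Aeq (ε : ℝ) (hc : sin (π/4 + ε/2) ≠ 0) :
    A20V (π/4) (-(π/4) + ε) 0 = As ε := by
  funext y
  unfold A20V As
  rw [show y + (-(π/4) + ε) + π/4 = y + ε by ring,
      show y + (-(π/4) + ε) - π/4 = (y + ε) - π/2 by ring,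
      show y + 2*(π/4) = y + π/2 by ring,
      show y + ((-(π/4) + ε) - π/4 + 0)/2 = (y + ε/2) - π/4 by ring,
      show y + ((-(π/4) + ε) + 3*(π/4) + 0)/2 = (y + ε/2) + π/4 by ring,
      idP (y+ε), idQ y, idR (y + ε/2),
      show 2*(y+ε) = 2*y + 2*ε by ring,
      show 2*(y+ε/2) = 2*y + ε by ring,
      idQR ε y, idPR ε y]
  rw [div_mul_div_comm]
  rw [show -(sin (2*y+2*ε))/2 * (sin (π/4+ε/2) * sin (2*y+ε/2-π/4))
      = (-(sin (π/4+ε/2))/2) * (sin (2*y+2*ε) * sin (2*y+ε/2-π/4)) by ring,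
    show sin (2*y)/2 * -(sin (π/4+ε/2) * cos (2*y+3*ε/2-π/4))
      = (-(sin (π/4+ε/2))/2) * (sin (2*y) * cos (2*y+3*ε/2-π/4)) by ring]
  exact mul_div_mul_left _ _ (by simpa using div_ne_zero (neg_ne_zero.2 hc) two_ne_zero)

lemma cot_sub_pi' (θ : ℝ) : Real.cot (θ - π) = Real.cot θ := by
  rw [Real.cot_eq_cos_div_sin, Real.cot_eq_cos_div_sin, Real.cos_sub_pi, Real.sin_sub_pi,
    neg_div_neg_eq]

lemma cot_sub_pi_div_two' (θ : ℝ) : Real.cot (θ - π/2) = -(sin θ / cos θ) := by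
  rw [Real.cot_eq_cos_div_sin, Real.cos_sub_pi_div_two, Real.sin_sub_pi_div_two, div_neg]


lemma hB (ε y : ℝ) (hs1 : sin y ≠ 0) (hc1 : cos y ≠ 0)
    (hs2 : sin (y+ε) ≠ 0) (hc2 : cos (y+ε) ≠ 0) :
    (2 * (-(sin (y+ε) / cos (y+ε))) - Real.cot y - Real.cot (y+ε) + 2 * Real.cot (2*y)
        - 2 * Real.cot (2*y + 2*ε)) * sin (2*y + 2*ε)
      = -((sin y / cos y) * sin (2*y + 2*ε) + cos (2*y + 2*ε) + 3) := by
  rw [Real.cot_eq_cos_div_sin y, Real.cot_eq_cos_div_sin (y+ε), Real.cot_eq_cos_div_sin,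
    Real.cot_eq_cos_div_sin, show (2*y + 2*ε) = 2*(y+ε) by ring, Real.sin_two_mul,
    Real.cos_two_mul, Real.sin_two_mul (y+ε), Real.cos_two_mul (y+ε)]
  field_simp
  linear_combination (-(4:ℝ) * cos y * sin y) *
      (Real.sin_sq_add_cos_sq (y+ε)) +
    ((2:ℝ) * sin (y+ε) * cos (y+ε)) * (Real.sin_sq_add_cos_sq y)

/-- closed form of kappa20V in the free-fermion specialization -/
noncomputable def Ks (ε y : ℝ) : ℝ :=
  ((sin y / cos y) * sin (2*y + 2*ε) + cos (2*y + 2*ε) + 3) * cos (2*y + ε) /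
    (4 * sin (π/4 + ε/2) * cos (2*y + 3*ε/2 - π/4))

lemma Keq (ε y : ℝ) (hs1 : sin y ≠ 0) (hc1 : cos y ≠ 0)
    (hs2 : sin (y+ε) ≠ 0) (hc2 : cos (y+ε) ≠ 0) :
    kappa20V (π/4) (-(π/4) + ε) 0 y = Ks ε y := by
  unfold kappa20V Ks
  have halpha : π / (π - 2 * (π/4)) = 2 := by
    rw [show π - 2*(π/4) = π/2 by ring]
    field_simp
  rw [halpha,
      show y + (-(π/4) + ε) + π/4 = y + ε by ring,
      show y + (-(π/4) + ε) - π/4 = (y + ε) - π/2 by ring,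
      show y + ((-(π/4) + ε) - π/4 + 0)/2 = (y + ε/2) - π/4 by ring,
      show y + ((-(π/4) + ε) + 3*(π/4) + 0)/2 = (y + ε/2) + π/4 by ring,
      show (2:ℝ) * ((y + ε) - π/2) = (2*y + 2*ε) - π by ring,
      cot_sub_pi', cot_sub_pi_div_two',
      show (2:ℝ) * (π/4) = π/2 by ring, Real.sin_pi_div_two]
  have e4 : sin (y+ε) * sin ((y+ε) - π/2) * sin ((y + ε/2) - π/4) * sin ((y + ε/2) + π/4)
      = sin (2*y + 2*ε) * cos (2*y + ε) / 4 := by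
    rw [show sin (y+ε) * sin ((y+ε) - π/2) * sin ((y + ε/2) - π/4) * sin ((y + ε/2) + π/4)
        = (sin (y+ε) * sin ((y+ε) - π/2)) * (sin ((y + ε/2) - π/4) * sin ((y + ε/2) + π/4))
        by ring, idP, idR, show 2*(y+ε) = 2*y+2*ε by ring, show 2*(y+ε/2) = 2*y+ε by ring]
    ring
  have e5 : sin (y+ε) * sin ((y+ε) - π/2) + sin ((y + ε/2) - π/4) * sin ((y + ε/2) + π/4)
      = -(sin (π/4 + ε/2) * cos (2*y + 3*ε/2 - π/4)) := by
    rw [idP, idR, show 2*(y+ε) = 2*y+2*ε by ring, show 2*(y+ε/2) = 2*y+ε by ring, idPR]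
  rw [e4, e5]
  rw [show (2 * -(sin (y+ε) / cos (y+ε)) - Real.cot y - Real.cot (y+ε) + 2 * Real.cot (2*y)
        - 2 * Real.cot (2*y + 2*ε)) * (sin (2*y + 2*ε) * cos (2*y + ε) / 4)
      = ((2 * -(sin (y+ε) / cos (y+ε)) - Real.cot y - Real.cot (y+ε) + 2 * Real.cot (2*y)
        - 2 * Real.cot (2*y + 2*ε)) * sin (2*y + 2*ε)) * cos (2*y + ε) / 4 by ring,
    hB ε y hs1 hc1 hs2 hc2]
  ring

lemma hd_lin (a b x : ℝ) : HasDerivAt (fun y : ℝ => a*y + b) a x := by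
  simpa using ((hasDerivAt_id x).const_mul a).add_const b
lemma hd_sin (a b x : ℝ) : HasDerivAt (fun y : ℝ => Real.sin (a*y + b)) (a * Real.cos (a*x + b)) x := by
  simpa [mul_comm, Function.comp_def] using (Real.hasDerivAt_sin (a*x+b)).comp x (hd_lin a b x)
lemma hd_cos (a b x : ℝ) : HasDerivAt (fun y : ℝ => Real.cos (a*y + b)) (-(a * Real.sin (a*x + b))) x := by
  have := (Real.hasDerivAt_cos (a*x+b)).comp x (hd_lin a b x)
  simpa [mul_comm, Function.comp_def] using this
lemma hd_sin2 (ε x : ℝ) : HasDerivAt (fun y : ℝ => sin (2*y + 2*ε)) (2 * cos (2*x + 2*ε)) x :=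
  hd_sin 2 (2*ε) x
lemma hd_sin0 (x : ℝ) : HasDerivAt (fun y : ℝ => sin (2*y)) (2 * cos (2*x)) x := by
  have := hd_sin 2 0 x; simpa using this
lemma hd_sing (ε x : ℝ) :
    HasDerivAt (fun y : ℝ => sin (2*y + ε/2 - π/4)) (2 * cos (2*x + ε/2 - π/4)) x := by
  have h := hd_sin 2 (ε/2 - π/4) x
  have e : (fun y : ℝ => sin (2*y + (ε/2 - π/4))) = fun y : ℝ => sin (2*y + ε/2 - π/4) := by
    funext y; congr 1; ring
  rw [e] at h; convert h using 2; ring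
lemma hd_cosk (ε x : ℝ) :
    HasDerivAt (fun y : ℝ => cos (2*y + 3*ε/2 - π/4)) (-(2 * sin (2*x + 3*ε/2 - π/4))) x := by
  have h := hd_cos 2 (3*ε/2 - π/4) x
  have e : (fun y : ℝ => cos (2*y + (3*ε/2 - π/4))) = fun y : ℝ => cos (2*y + 3*ε/2 - π/4) := by
    funext y; congr 1; ring
  rw [e] at h; convert h using 3; ring
lemma hd_cosw (ε x : ℝ) :
    HasDerivAt (fun y : ℝ => cos (2*y + ε)) (-(2 * sin (2*x + ε))) x := hd_cos 2 ε x

noncomputable def Ad (ε x : ℝ) : ℝ :=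
  (2 * cos ε * sin (2*x + 2*ε) * sin (2*x)
    - 2 * sin (2*ε) * sin (2*x + ε/2 - π/4) * cos (2*x + 3*ε/2 - π/4))
  / (sin (2*x) * cos (2*x + 3*ε/2 - π/4))^2

noncomputable def Kd (ε x : ℝ) : ℝ :=
  ((((cos x * cos x - sin x * -sin x) / cos x ^ 2 * sin (2*x + 2*ε)
        + sin x / cos x * (2 * cos (2*x + 2*ε)) + -(2 * sin (2*x + 2*ε))) * cos (2*x + ε)
      + (sin x / cos x * sin (2*x + 2*ε) + cos (2*x + 2*ε) + 3) * -(2 * sin (2*x + ε)))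
      * (4 * sin (π/4 + ε/2) * cos (2*x + 3*ε/2 - π/4))
    - (sin x / cos x * sin (2*x + 2*ε) + cos (2*x + 2*ε) + 3) * cos (2*x + ε)
      * (4 * sin (π/4 + ε/2) * -(2 * sin (2*x + 3*ε/2 - π/4))))
  / (4 * sin (π/4 + ε/2) * cos (2*x + 3*ε/2 - π/4)) ^ 2

lemma hAs (ε x : ℝ) (h3 : sin (2*x) ≠ 0) (h4 : cos (2*x + 3*ε/2 - π/4) ≠ 0) :
    HasDerivAt (As ε) (Ad ε x) x := by
  have hdiv := ((hd_sin2 ε x).mul (hd_sing ε x)).div ((hd_sin0 x).mul (hd_cosk ε x))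
    (mul_ne_zero h3 h4)
  have hsin2 : sin (2*x+2*ε) * cos (2*x) - cos (2*x+2*ε) * sin (2*x) = sin (2*ε) := by
    rw [← Real.sin_sub]; congr 1; ring
  have hcos : cos (2*x + 3*ε/2 - π/4) * cos (2*x + ε/2 - π/4)
      + sin (2*x + 3*ε/2 - π/4) * sin (2*x + ε/2 - π/4) = cos ε := by
    rw [← Real.cos_sub]; congr 1; ring
  have : As ε = fun y => sin (2*y + 2*ε) * sin (2*y + ε/2 - π/4)
      / (sin (2*y) * cos (2*y + 3*ε/2 - π/4)) := rfl
  rw [this, Ad]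
  convert hdiv using 2
  · rfl
  · rfl
  · rfl
  · simp only [Pi.mul_apply]
    linear_combination (-(2:ℝ) * sin (2*x+2*ε) * sin (2*x)) * hcos
      + (2 * sin (2*x + ε/2 - π/4) * cos (2*x + 3*ε/2 - π/4)) * hsin2
  · rfl

lemma hKs (ε x : ℝ) (hc1 : cos x ≠ 0) (hc : sin (π/4 + ε/2) ≠ 0)
    (h4 : cos (2*x + 3*ε/2 - π/4) ≠ 0) :
    HasDerivAt (Ks ε) (Kd ε x) x := by
  have hq : HasDerivAt (fun y : ℝ => sin y / cos y)
      ((cos x * cos x - sin x * -sin x) / cos x ^ 2) x :=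
    (Real.hasDerivAt_sin x).div (Real.hasDerivAt_cos x) hc1
  have hnum := (((hq.mul (hd_sin2 ε x)).add (hd_cos 2 (2*ε) x)).add_const 3).mul (hd_cosw ε x)
  have hden := (hd_cosk ε x).const_mul (4 * sin (π/4 + ε/2))
  have hdiv := hnum.div hden
    (mul_ne_zero (mul_ne_zero four_ne_zero hc) h4)
  exact hdiv

lemma sinc : Tendsto (fun y : ℝ => sin y / y) (𝓝[≠] (0:ℝ)) (𝓝 1) := by
  have h := hasDerivAt_iff_tendsto_slope.mp (Real.hasDerivAt_sin 0)
  rw [Real.cos_zero] at h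
  refine h.congr (fun y => ?_)
  simp [slope_def_field, div_eq_div_iff]

lemma tend_poly (a b c : ℝ) :
    Tendsto (fun s : ℝ => a*s^2 + b*s + c) (𝓝[>] (0:ℝ)) (𝓝 c) := by
  have hcont : Continuous fun s : ℝ => a*s^2 + b*s + c := by continuity
  have := (hcont.tendsto 0).mono_left (nhdsWithin_le_nhds (s := Set.Ioi (0:ℝ)))
  simpa using this

lemma tend_sin (a b c : ℝ) :
    Tendsto (fun s : ℝ => sin (a*s^2 + b*s + c)) (𝓝[>] (0:ℝ)) (𝓝 (sin c)) :=
  (Real.continuous_sin.tendsto c).comp (tend_poly a b c)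

lemma tend_cos (a b c : ℝ) :
    Tendsto (fun s : ℝ => cos (a*s^2 + b*s + c)) (𝓝[>] (0:ℝ)) (𝓝 (cos c)) :=
  (Real.continuous_cos.tendsto c).comp (tend_poly a b c)

lemma lim1 (c d : ℝ) (hc : 0 < c) :
    Tendsto (fun s : ℝ => sin (c*s + d*s^2) / s) (𝓝[>] (0:ℝ)) (𝓝 c) := by
  have hlin : Tendsto (fun s : ℝ => c + d*s) (𝓝[>] (0:ℝ)) (𝓝 c) := by
    have := tend_poly 0 d c
    refine this.congr (fun s => by ring)
  have hpos : ∀ᶠ s in 𝓝[>] (0:ℝ), 0 < c + d*s := hlin.eventually (eventually_gt_nhds hc)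
  have hφpos : ∀ᶠ s in 𝓝[>] (0:ℝ), 0 < c*s + d*s^2 := by
    filter_upwards [hpos, self_mem_nhdsWithin] with s h1 h2
    have : c*s + d*s^2 = s * (c + d*s) := by ring
    rw [this]; exact mul_pos h2 h1
  have hφ : Tendsto (fun s : ℝ => c*s + d*s^2) (𝓝[>] (0:ℝ)) (𝓝[≠] (0:ℝ)) := by
    rw [tendsto_nhdsWithin_iff]
    constructor
    · have := tend_poly d c 0
      simpa using this.congr (fun s => by ring)
    · filter_upwards [hφpos] with s hs; exact ne_of_gt hs
  have h1 := sinc.comp hφ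
  have h2 : Tendsto (fun s : ℝ => (c*s + d*s^2) / s) (𝓝[>] (0:ℝ)) (𝓝 c) := by
    refine hlin.congr' ?_
    filter_upwards [self_mem_nhdsWithin] with s hs
    have hs' : (s:ℝ) ≠ 0 := ne_of_gt hs
    field_simp
  have h3 := h1.mul h2
  rw [one_mul] at h3
  refine h3.congr' ?_
  filter_upwards [hφpos] with s hs
  have hφne : c*s + d*s^2 ≠ 0 := ne_of_gt hs
  simp only [Function.comp]
  rw [div_mul_div_comm, mul_comm (c*s + d*s^2) s, mul_div_mul_right _ _ hφne]

lemma lim2 : Tendsto (fun s : ℝ => sin (2*s^2) / s^2) (𝓝[>] (0:ℝ)) (𝓝 2) := by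
  have hφ : Tendsto (fun s : ℝ => 2*s^2) (𝓝[>] (0:ℝ)) (𝓝[≠] (0:ℝ)) := by
    rw [tendsto_nhdsWithin_iff]
    constructor
    · have := tend_poly 2 0 0
      simpa using this.congr (fun s => by ring)
    · filter_upwards [self_mem_nhdsWithin] with s hs
      have hs0 : (0:ℝ) < s := hs
      have : (0:ℝ) < 2*s^2 := by positivity
      exact ne_of_gt this
  have h1 := sinc.comp hφ
  have h3 := h1.mul (tendsto_const_nhds (x := (2:ℝ)))
  rw [one_mul] at h3
  refine h3.congr' ?_
  filter_upwards [self_mem_nhdsWithin] with s hs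
  have hs' : (s:ℝ) ≠ 0 := ne_of_gt hs
  simp only [Function.comp]
  field_simp

section atoms
variable (ξ : ℝ)

lemma at_sinx : Tendsto (fun s : ℝ => sin (ξ*s)) (𝓝[>] (0:ℝ)) (𝓝 0) := by
  have h := tend_sin 0 ξ 0
  rw [Real.sin_zero] at h
  exact h.congr (fun s => by norm_num)

lemma at_cosx : Tendsto (fun s : ℝ => cos (ξ*s)) (𝓝[>] (0:ℝ)) (𝓝 1) := by
  have h := tend_cos 0 ξ 0
  rw [Real.cos_zero] at h
  exact h.congr (fun s => by norm_num)

lemma at_sinv : Tendsto (fun s : ℝ => sin (2*(ξ*s) + 2*s^2)) (𝓝[>] (0:ℝ)) (𝓝 0) := by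
  have h := tend_sin 2 (2*ξ) 0
  rw [Real.sin_zero] at h
  exact h.congr (fun s => by congr 1; ring)

lemma at_cosv : Tendsto (fun s : ℝ => cos (2*(ξ*s) + 2*s^2)) (𝓝[>] (0:ℝ)) (𝓝 1) := by
  have h := tend_cos 2 (2*ξ) 0
  rw [Real.cos_zero] at h
  exact h.congr (fun s => by congr 1; ring)

lemma at_cosw : Tendsto (fun s : ℝ => cos (2*(ξ*s) + s^2)) (𝓝[>] (0:ℝ)) (𝓝 1) := by
  have h := tend_cos 1 (2*ξ) 0
  rw [Real.cos_zero] at h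
  exact h.congr (fun s => by congr 1; ring)

lemma at_sinw : Tendsto (fun s : ℝ => sin (2*(ξ*s) + s^2)) (𝓝[>] (0:ℝ)) (𝓝 0) := by
  have h := tend_sin 1 (2*ξ) 0
  rw [Real.sin_zero] at h
  exact h.congr (fun s => by congr 1; ring)

lemma at_c : Tendsto (fun s : ℝ => sin (π/4 + s^2/2)) (𝓝[>] (0:ℝ)) (𝓝 (Real.sqrt 2 / 2)) := by
  have h := tend_sin (1/2) 0 (π/4)
  rw [Real.sin_pi_div_four] at h
  exact h.congr (fun s => by congr 1; ring)

lemma at_k : Tendsto (fun s : ℝ => cos (2*(ξ*s) + 3*s^2/2 - π/4)) (𝓝[>] (0:ℝ))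
    (𝓝 (Real.sqrt 2 / 2)) := by
  have h := tend_cos (3/2) (2*ξ) (-(π/4))
  rw [show Real.cos (-(π/4)) = Real.sqrt 2/2 by rw [Real.cos_neg, Real.cos_pi_div_four]] at h
  exact h.congr (fun s => by congr 1; ring)

lemma at_K : Tendsto (fun s : ℝ => sin (2*(ξ*s) + 3*s^2/2 - π/4)) (𝓝[>] (0:ℝ))
    (𝓝 (-(Real.sqrt 2 / 2))) := by
  have h := tend_sin (3/2) (2*ξ) (-(π/4))
  rw [show Real.sin (-(π/4)) = -(Real.sqrt 2/2) by rw [Real.sin_neg, Real.sin_pi_div_four]] at h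
  exact h.congr (fun s => by congr 1; ring)

lemma at_g : Tendsto (fun s : ℝ => sin (2*(ξ*s) + s^2/2 - π/4)) (𝓝[>] (0:ℝ))
    (𝓝 (-(Real.sqrt 2 / 2))) := by
  have h := tend_sin (1/2) (2*ξ) (-(π/4))
  rw [show Real.sin (-(π/4)) = -(Real.sqrt 2/2) by rw [Real.sin_neg, Real.sin_pi_div_four]] at h
  exact h.congr (fun s => by congr 1; ring)

lemma at_cose : Tendsto (fun s : ℝ => cos (s^2)) (𝓝[>] (0:ℝ)) (𝓝 1) := by
  have h := tend_cos 1 0 0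
  rw [Real.cos_zero] at h
  exact h.congr (fun s => by norm_num)

lemma at_b1 (hξ : 0 < ξ) : Tendsto (fun s : ℝ => sin (2*(ξ*s) + 2*s^2) / s) (𝓝[>] (0:ℝ))
    (𝓝 (2*ξ)) := by
  have h := lim1 (2*ξ) 2 (by linarith)
  exact h.congr (fun s => by rw [show 2*ξ*s + 2*s^2 = 2*(ξ*s) + 2*s^2 by ring])

lemma at_b2 (hξ : 0 < ξ) : Tendsto (fun s : ℝ => sin (2*(ξ*s)) / s) (𝓝[>] (0:ℝ))
    (𝓝 (2*ξ)) := by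
  have h := lim1 (2*ξ) 0 (by linarith)
  exact h.congr (fun s => by rw [show 2*ξ*s + 0*s^2 = 2*(ξ*s) by ring])

end atoms

lemma tvc {f g : ℝ → ℝ} {l : Filter ℝ} {a b : ℝ} (h : Tendsto f l (𝓝 a))
    (hfg : ∀ x, f x = g x) (hab : a = b) : Tendsto g l (𝓝 b) := hab ▸ h.congr hfg

section limits
variable (ξ : ℝ) (hξ : 0 < ξ)

lemma hsqrt2 : Real.sqrt 2 ^ 2 = 2 := Real.sq_sqrt (by norm_num)
lemma hrpos : (0:ℝ) < Real.sqrt 2 / 2 := by positivity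

lemma limD : Tendsto (fun s : ℝ => 4 * sin (π/4 + s^2/2) * cos (2*(ξ*s) + 3*s^2/2 - π/4))
    (𝓝[>] (0:ℝ)) (𝓝 2) := by
  exact tvc (((at_c).const_mul 4).mul (at_k ξ)) (fun s => rfl)
    (by linear_combination hsqrt2)

lemma limP : Tendsto
    (fun s : ℝ => sin (ξ*s) / cos (ξ*s) * sin (2*(ξ*s) + 2*s^2) + cos (2*(ξ*s) + 2*s^2) + 3)
    (𝓝[>] (0:ℝ)) (𝓝 4) := by
  exact tvc (((((at_sinx ξ).div (at_cosx ξ) one_ne_zero).mul (at_sinv ξ)).add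
    (at_cosv ξ)).add_const 3) (fun s => rfl) (by norm_num)

lemma limKd : Tendsto (fun s : ℝ => Kd (s^2) (ξ*s)) (𝓝[>] (0:ℝ)) (𝓝 (-4)) := by
  have hq : Tendsto (fun s : ℝ =>
      (cos (ξ*s) * cos (ξ*s) - sin (ξ*s) * -sin (ξ*s)) / cos (ξ*s) ^ 2)
      (𝓝[>] (0:ℝ)) (𝓝 1) :=
    tvc ((((at_cosx ξ).mul (at_cosx ξ)).sub ((at_sinx ξ).mul (at_sinx ξ).neg)).div
      ((at_cosx ξ).pow 2) (by norm_num)) (fun s => rfl) (by norm_num)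
  have hinner1 : Tendsto (fun s : ℝ =>
      (cos (ξ*s) * cos (ξ*s) - sin (ξ*s) * -sin (ξ*s)) / cos (ξ*s) ^ 2 * sin (2*(ξ*s) + 2*s^2)
        + sin (ξ*s) / cos (ξ*s) * (2 * cos (2*(ξ*s) + 2*s^2)) + -(2 * sin (2*(ξ*s) + 2*s^2)))
      (𝓝[>] (0:ℝ)) (𝓝 0) :=
    tvc (((hq.mul (at_sinv ξ)).add
      (((at_sinx ξ).div (at_cosx ξ) one_ne_zero).mul ((at_cosv ξ).const_mul 2))).add
      (((at_sinv ξ).const_mul 2).neg)) (fun s => rfl) (by norm_num)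
  have hN1 : Tendsto (fun s : ℝ =>
      ((cos (ξ*s) * cos (ξ*s) - sin (ξ*s) * -sin (ξ*s)) / cos (ξ*s) ^ 2 * sin (2*(ξ*s) + 2*s^2)
        + sin (ξ*s) / cos (ξ*s) * (2 * cos (2*(ξ*s) + 2*s^2)) + -(2 * sin (2*(ξ*s) + 2*s^2)))
          * cos (2*(ξ*s) + s^2)
      + (sin (ξ*s) / cos (ξ*s) * sin (2*(ξ*s) + 2*s^2) + cos (2*(ξ*s) + 2*s^2) + 3)
          * -(2 * sin (2*(ξ*s) + s^2)))
      (𝓝[>] (0:ℝ)) (𝓝 0) :=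
    tvc ((hinner1.mul (at_cosw ξ)).add ((limP ξ).mul (((at_sinw ξ).const_mul 2).neg)))
      (fun s => rfl) (by norm_num)
  have hlast : Tendsto (fun s : ℝ =>
      (sin (ξ*s) / cos (ξ*s) * sin (2*(ξ*s) + 2*s^2) + cos (2*(ξ*s) + 2*s^2) + 3)
        * cos (2*(ξ*s) + s^2)
        * (4 * sin (π/4 + s^2/2) * -(2 * sin (2*(ξ*s) + 3*s^2/2 - π/4))))
      (𝓝[>] (0:ℝ)) (𝓝 16) :=
    tvc (((limP ξ).mul (at_cosw ξ)).mul
      (((at_c).const_mul 4).mul (((at_K ξ).const_mul 2).neg)))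
      (fun s => rfl) (by linear_combination 8 * hsqrt2)
  exact tvc (((hN1.mul (limD ξ)).sub hlast).div ((limD ξ).pow 2) (by norm_num))
    (fun s => rfl) (by norm_num)

lemma limKs : Tendsto (fun s : ℝ => Ks (s^2) (ξ*s)) (𝓝[>] (0:ℝ)) (𝓝 2) := by
  exact tvc (((limP ξ).mul (at_cosw ξ)).div (limD ξ) two_ne_zero) (fun s => rfl) (by norm_num)

lemma limAd (hξ : 0 < ξ) : Tendsto (fun s : ℝ => Ad (s^2) (ξ*s)) (𝓝[>] (0:ℝ))
    (𝓝 ((8*ξ^2 + 2) / (2*ξ^2))) := by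
  have hN : Tendsto (fun s : ℝ =>
      2 * cos (s^2) * (sin (2*(ξ*s) + 2*s^2) / s) * (sin (2*(ξ*s)) / s)
        - 2 * (sin (2*s^2) / s^2) * sin (2*(ξ*s) + s^2/2 - π/4)
          * cos (2*(ξ*s) + 3*s^2/2 - π/4))
      (𝓝[>] (0:ℝ)) (𝓝 (8*ξ^2 + 2)) :=
    tvc (((((at_cose).const_mul 2).mul (at_b1 ξ hξ)).mul (at_b2 ξ hξ)).sub
      (((lim2.const_mul 2).mul (at_g ξ)).mul (at_k ξ)))
      (fun s => rfl) (by linear_combination hsqrt2)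
  have hD : Tendsto (fun s : ℝ =>
      (sin (2*(ξ*s)) / s)^2 * cos (2*(ξ*s) + 3*s^2/2 - π/4)^2)
      (𝓝[>] (0:ℝ)) (𝓝 (2*ξ^2)) :=
    tvc (((at_b2 ξ hξ).pow 2).mul ((at_k ξ).pow 2)) (fun s => rfl)
      (by linear_combination ξ^2 * hsqrt2)
  have h := hN.div hD (mul_pos two_pos (pow_pos hξ 2)).ne'
  refine h.congr' ?_
  filter_upwards [self_mem_nhdsWithin] with s hs
  have hs' : (s:ℝ) ≠ 0 := ne_of_gt hs
  have hs2 : (s:ℝ)^2 ≠ 0 := pow_ne_zero 2 hs'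
  simp only [Pi.div_apply, Ad]
  have e1 : 2 * cos (s^2) * (sin (2*(ξ*s) + 2*s^2) / s) * (sin (2*(ξ*s)) / s)
        - 2 * (sin (2*s^2) / s^2) * sin (2*(ξ*s) + s^2/2 - π/4)
          * cos (2*(ξ*s) + 3*s^2/2 - π/4)
      = (2 * cos (s^2) * sin (2*(ξ*s) + 2*s^2) * sin (2*(ξ*s))
        - 2 * sin (2*s^2) * sin (2*(ξ*s) + s^2/2 - π/4)
          * cos (2*(ξ*s) + 3*s^2/2 - π/4)) / s^2 := by
    field_simp
  have e2 : (sin (2*(ξ*s)) / s)^2 * cos (2*(ξ*s) + 3*s^2/2 - π/4)^2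
      = (sin (2*(ξ*s)) * cos (2*(ξ*s) + 3*s^2/2 - π/4))^2 / s^2 := by
    field_simp
  rw [e1, e2, div_div_div_comm, div_self hs2, div_one]

lemma limAs (hξ : 0 < ξ) : Tendsto (fun s : ℝ => As (s^2) (ξ*s)) (𝓝[>] (0:ℝ)) (𝓝 (-1)) := by
  have hN : Tendsto (fun s : ℝ =>
      (sin (2*(ξ*s) + 2*s^2) / s) * sin (2*(ξ*s) + s^2/2 - π/4))
      (𝓝[>] (0:ℝ)) (𝓝 (2*ξ * -(Real.sqrt 2/2))) := (at_b1 ξ hξ).mul (at_g ξ)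
  have hD : Tendsto (fun s : ℝ =>
      (sin (2*(ξ*s)) / s) * cos (2*(ξ*s) + 3*s^2/2 - π/4))
      (𝓝[>] (0:ℝ)) (𝓝 (2*ξ * (Real.sqrt 2/2))) := (at_b2 ξ hξ).mul (at_k ξ)
  have hDne : (2*ξ * (Real.sqrt 2/2)) ≠ 0 := (mul_pos (by linarith) hrpos).ne'
  have h := hN.div hD hDne
  have hval : (2*ξ * -(Real.sqrt 2/2)) / (2*ξ * (Real.sqrt 2/2)) = -1 := by
    rw [div_eq_iff hDne]; ring
  rw [hval] at h
  refine h.congr' ?_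
  filter_upwards [self_mem_nhdsWithin] with s hs
  have hs' : (s:ℝ) ≠ 0 := ne_of_gt hs
  simp only [Pi.div_apply, As]
  have e1 : (sin (2*(ξ*s) + 2*s^2) / s) * sin (2*(ξ*s) + s^2/2 - π/4)
      = (sin (2*(ξ*s) + 2*s^2) * sin (2*(ξ*s) + s^2/2 - π/4)) / s := by ring
  have e2 : (sin (2*(ξ*s)) / s) * cos (2*(ξ*s) + 3*s^2/2 - π/4)
      = (sin (2*(ξ*s)) * cos (2*(ξ*s) + 3*s^2/2 - π/4)) / s := by ring
  rw [e1, e2, div_div_div_comm, div_self hs', div_one]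

end limits

open Filter Topology

/-- In the free-fermion case `η = π/4`, `μ = 0`, the NE
arctic-curve parametrization degenerates to a straight segment as `λ → -π/4⁺`,
under the square-root rescaling `ξ ↦ ξ√ε` of the parameter. -/
theorem NE_branch_free_fermion_segment' (ξ : ℝ) (h0 : 0 < ξ) :
    Tendsto (fun ε : ℝ => Xne (π / 4) (-(π / 4) + ε) 0 (ξ * Real.sqrt ε)) (𝓝[>] 0)
      (𝓝 (-(4 * ξ ^ 2 / (1 + 4 * ξ ^ 2)))) ∧
    Tendsto (fun ε : ℝ => Yne (π / 4) (-(π / 4) + ε) 0 (ξ * Real.sqrt ε)) (𝓝[>] 0)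
      (𝓝 (2 - 4 * ξ ^ 2 / (1 + 4 * ξ ^ 2))) := by
  have hπ : (0:ℝ) < π := Real.pi_pos
  have hπ3 : (3:ℝ) < π := Real.pi_gt_three
  have hξne : ξ ≠ 0 := ne_of_gt h0
  set δ : ℝ := min (1/2) (π/(8*ξ)) with hδdef
  have hδpos : 0 < δ := lt_min (by norm_num) (by positivity)
  -- master eventual identity in the s = √ε parametrization
  have master : ∀ᶠ s in 𝓝[>] (0:ℝ),
      Xne (π/4) (-(π/4) + s^2) 0 (ξ*s) = Kd (s^2) (ξ*s) / Ad (s^2) (ξ*s) ∧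
      Yne (π/4) (-(π/4) + s^2) 0 (ξ*s)
        = Ks (s^2) (ξ*s) - As (s^2) (ξ*s) * (Kd (s^2) (ξ*s) / Ad (s^2) (ξ*s)) := by
    filter_upwards [Ioo_mem_nhdsGT hδpos]
      with s hs
    obtain ⟨hs0, hsδ⟩ := hs
    have hs12 : s < 1/2 := lt_of_lt_of_le hsδ (min_le_left _ _)
    have hsξ : s < π/(8*ξ) := lt_of_lt_of_le hsδ (min_le_right _ _)
    have hε0 : 0 < s^2 := by positivity
    have hε8 : s^2 < π/8 := by nlinarith
    have hx0 : 0 < ξ*s := mul_pos h0 hs0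
    have hx8 : ξ*s < π/8 := by
      calc ξ*s < ξ*(π/(8*ξ)) := by exact mul_lt_mul_of_pos_left hsξ h0
        _ = π/8 := by field_simp
    set ε := s^2 with hεdef
    set x := ξ*s with hxdef
    -- nonvanishing facts at x
    have hc : sin (π/4 + ε/2) ≠ 0 :=
      (Real.sin_pos_of_pos_of_lt_pi (by linarith) (by linarith)).ne'
    have hcx : cos x ≠ 0 :=
      (Real.cos_pos_of_mem_Ioo ⟨by linarith, by linarith⟩).ne'
    have h3 : sin (2*x) ≠ 0 :=
      (Real.sin_pos_of_pos_of_lt_pi (by linarith) (by linarith)).ne'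
    have h4 : cos (2*x + 3*ε/2 - π/4) ≠ 0 :=
      (Real.cos_pos_of_mem_Ioo ⟨by linarith, by linarith⟩).ne'
    have hsx : sin x ≠ 0 :=
      (Real.sin_pos_of_pos_of_lt_pi (by linarith) (by linarith)).ne'
    have hsxe : sin (x + ε) ≠ 0 :=
      (Real.sin_pos_of_pos_of_lt_pi (by linarith) (by linarith)).ne'
    have hcxe : cos (x + ε) ≠ 0 :=
      (Real.cos_pos_of_mem_Ioo ⟨by linarith, by linarith⟩).ne'
    have hAfun : A20V (π/4) (-(π/4) + ε) 0 = As ε := Aeq ε hc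
    have hKev : kappa20V (π/4) (-(π/4) + ε) 0 =ᶠ[𝓝 x] Ks ε := by
      have hxmem : x ∈ Set.Ioo (0:ℝ) (π/8) := ⟨hx0, hx8⟩
      filter_upwards [isOpen_Ioo.mem_nhds hxmem] with y hy
      have h1 : sin y ≠ 0 :=
        (Real.sin_pos_of_pos_of_lt_pi hy.1 (by linarith [hy.2])).ne'
      have h2 : cos y ≠ 0 :=
        (Real.cos_pos_of_mem_Ioo ⟨by linarith [hy.1], by linarith [hy.2]⟩).ne'
      have h5 : sin (y+ε) ≠ 0 :=
        (Real.sin_pos_of_pos_of_lt_pi (by linarith [hy.1]) (by linarith [hy.2])).ne'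
      have h6 : cos (y+ε) ≠ 0 :=
        (Real.cos_pos_of_mem_Ioo ⟨by linarith [hy.1], by linarith [hy.2]⟩).ne'
      exact Keq ε y h1 h2 h5 h6
    have hdK : deriv (kappa20V (π/4) (-(π/4) + ε) 0) x = Kd ε x := by
      rw [hKev.deriv_eq, (hKs ε x hcx hc h4).deriv]
    have hdA : deriv (A20V (π/4) (-(π/4) + ε) 0) x = Ad ε x := by
      rw [hAfun, (hAs ε x h3 h4).deriv]
    constructor
    · simp only [Xne]
      rw [hdK, hdA]
    · simp only [Yne, Xne]
      rw [hdK, hdA, hAfun, Keq ε x hsx hcx hsxe hcxe]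
  -- limits in the s parametrization
  have hADne : ((8*ξ^2 + 2) / (2*ξ^2)) ≠ 0 :=
    (div_pos (by positivity) (mul_pos two_pos (pow_pos h0 2))).ne'
  have hXdiv := (limKd ξ).div (limAd ξ h0) hADne
  have hXval : (-4 : ℝ) / ((8*ξ^2 + 2) / (2*ξ^2)) = -(4*ξ^2/(1+4*ξ^2)) := by
    have hd1 : (8*ξ^2 + 2 : ℝ) ≠ 0 := by positivity
    have hd2 : (1 + 4*ξ^2 : ℝ) ≠ 0 := by positivity
    rw [div_div_eq_mul_div]
    field_simp
    ring
  rw [hXval] at hXdiv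
  have hX_s : Tendsto (fun s : ℝ => Xne (π/4) (-(π/4) + s^2) 0 (ξ*s)) (𝓝[>] (0:ℝ))
      (𝓝 (-(4*ξ^2/(1+4*ξ^2)))) := by
    refine hXdiv.congr' ?_
    filter_upwards [master] with s hm
    exact hm.1.symm
  have hYdiv := (limKs ξ).sub ((limAs ξ h0).mul hXdiv)
  have hYval : (2:ℝ) - (-1) * -(4*ξ^2/(1+4*ξ^2)) = 2 - 4*ξ^2/(1+4*ξ^2) := by ring
  rw [hYval] at hYdiv
  have hY_s : Tendsto (fun s : ℝ => Yne (π/4) (-(π/4) + s^2) 0 (ξ*s)) (𝓝[>] (0:ℝ))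
      (𝓝 (2 - 4*ξ^2/(1+4*ξ^2))) := by
    refine hYdiv.congr' ?_
    filter_upwards [master] with s hm
    exact hm.2.symm
  -- compose with the square root
  have hsq : Tendsto Real.sqrt (𝓝[>] (0:ℝ)) (𝓝[>] (0:ℝ)) := by
    rw [tendsto_nhdsWithin_iff]
    constructor
    · have h := Real.continuous_sqrt.tendsto 0
      rw [Real.sqrt_zero] at h
      exact h.mono_left nhdsWithin_le_nhds
    · filter_upwards [self_mem_nhdsWithin] with a ha
      exact Real.sqrt_pos.2 ha
  constructor
  · refine (hX_s.comp hsq).congr' ?_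
    filter_upwards [self_mem_nhdsWithin] with t ht
    simp only [Function.comp]
    rw [Real.sq_sqrt (le_of_lt ht)]
  · refine (hY_s.comp hsq).congr' ?_
    filter_upwards [self_mem_nhdsWithin] with t ht
    simp only [Function.comp]
    rw [Real.sq_sqrt (le_of_lt ht)]
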